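/- Let n, m, r ∈ ℕ, B ∈ ℝ^{n×m}, D ∈ ℝ^{n×n}, C₀ ∈ ℝ^{n×r}, K ∈ ℝ^{m×2n}, and scalars α, γ, ρ, μ, β, π, κ all positive. Let S ∈ ℝ^{r×r} and P ∈ ℝ^{2n×2n} be symmetric positive definite. Define M := A_Kᵀ P + P A_K + μ P E₀ E₀ᵀ P + μ^{-1} Kᵀ Bᵀ B K + β P F₀ F₀ᵀ P + β^{-1} γ^{-2} G₀ᵀ G₀ + π P G₀ᵀ G₀ P + π^{-1} α^{-2} G₀ᵀ Dᵀ D G₀ + κ P G₀ᵀ G₀ P. Assume (i) M + ρP is negative definite, and (ii) the symmetric block matrix [ρS, C₀ᵀ; C₀, κI_n] is positive definite. Then for every ζ ∈ ℝ^r with ζ ≠ 0 and every x ∈ ℝ^{2n} with σ := G₀x ≠ 0 one has xᵀ R(σ) M R(σ) x + κ^{-1} ζᵀ C₀ᵀ C₀ ζ < ρ ( ζᵀ S ζ − xᵀ R(σ) P R(σ) x ). -/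

import Mathlib

open Matrix

noncomputable section

/-- Euclidean norm of a real vector. -/
def enorm {n : ℕ} (v : Fin n → ℝ) : ℝ := Real.sqrt (v ⬝ᵥ v)

/-- The block matrix `G₀ = [I_n 0] ∈ ℝ^{n×2n}`. -/
def G0 (n : ℕ) : Matrix (Fin n) (Fin n ⊕ Fin n) ℝ := fromCols 1 0

/-- The block matrix `F₀ = [0; I_n] ∈ ℝ^{2n×n}`. -/
def F0 (n : ℕ) : Matrix (Fin n ⊕ Fin n) (Fin n) ℝ := fromRows 0 1

/-- The block matrix `E₀ = [(1/2)I_n; 0] ∈ ℝ^{2n×n}`. -/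
def E0 (n : ℕ) : Matrix (Fin n ⊕ Fin n) (Fin n) ℝ := fromRows ((2 : ℝ)⁻¹ • 1) 0

/-- The block matrix `A₀ = [[0,0],[I_n,0]] ∈ ℝ^{2n×2n}`. -/
def A0 (n : ℕ) : Matrix (Fin n ⊕ Fin n) (Fin n ⊕ Fin n) ℝ := fromBlocks 0 0 1 0

/-- The scalar gain `c(σ) = 1/√‖σ‖ + α`. -/
def cfun {n : ℕ} (α : ℝ) (σ : Fin n → ℝ) : ℝ := 1 / Real.sqrt (enorm σ) + α

/-- The matrix `R(σ) = diag(c(σ)I_n, I_n)`. -/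
def Rmat {n : ℕ} (α : ℝ) (σ : Fin n → ℝ) : Matrix (Fin n ⊕ Fin n) (Fin n ⊕ Fin n) ℝ :=
  fromBlocks (cfun α σ • 1) 0 0 1

/-- Lemma 2 of the paper: the matrix inequalities (43) and (44) imply the algebraic
inequality behind `V̇ < ρ c(σ)(v − V)`. -/
theorem stmt6 {n m r : ℕ} (B : Matrix (Fin n) (Fin m) ℝ) (D : Matrix (Fin n) (Fin n) ℝ)
    (C0 : Matrix (Fin n) (Fin r) ℝ) (K : Matrix (Fin m) (Fin n ⊕ Fin n) ℝ)
    (α γ ρ μ β π κ : ℝ) (hα : 0 < α) (hγ : 0 < γ) (hρ : 0 < ρ) (hμ : 0 < μ)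
    (hβ : 0 < β) (hπ : 0 < π) (hκ : 0 < κ)
    (S : Matrix (Fin r) (Fin r) ℝ) (P : Matrix (Fin n ⊕ Fin n) (Fin n ⊕ Fin n) ℝ)
    (hS : S.PosDef) (hP : P.PosDef)
    (M : Matrix (Fin n ⊕ Fin n) (Fin n ⊕ Fin n) ℝ)
    (hM : M = (A0 n + fromRows B 0 * K)ᵀ * P + P * (A0 n + fromRows B 0 * K)
      + μ • (P * E0 n * (E0 n)ᵀ * P) + μ⁻¹ • (Kᵀ * Bᵀ * B * K)
      + β • (P * F0 n * (F0 n)ᵀ * P) + (β⁻¹ * (γ ^ 2)⁻¹) • ((G0 n)ᵀ * G0 n)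
      + π • (P * (G0 n)ᵀ * G0 n * P)
      + (π⁻¹ * (α ^ 2)⁻¹) • ((G0 n)ᵀ * Dᵀ * D * G0 n)
      + κ • (P * (G0 n)ᵀ * G0 n * P))
    (h1 : (-(M + ρ • P)).PosDef)
    (h2 : (fromBlocks (ρ • S) C0ᵀ C0 (κ • (1 : Matrix (Fin n) (Fin n) ℝ))).PosDef) :
    ∀ (ζ : Fin r → ℝ), ζ ≠ 0 → ∀ (x : Fin n ⊕ Fin n → ℝ), G0 n *ᵥ x ≠ 0 →
      x ⬝ᵥ ((Rmat α (G0 n *ᵥ x) * M * Rmat α (G0 n *ᵥ x)) *ᵥ x)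
        + κ⁻¹ * (ζ ⬝ᵥ ((C0ᵀ * C0) *ᵥ ζ)) <
      ρ * (ζ ⬝ᵥ (S *ᵥ ζ) - x ⬝ᵥ ((Rmat α (G0 n *ᵥ x) * P * Rmat α (G0 n *ᵥ x)) *ᵥ x)) := by
  intro ζ hζ x hx
  -- Part 2 (from h2): Schur complement inequality in ζ
  have part2 : κ⁻¹ * (ζ ⬝ᵥ ((C0ᵀ * C0) *ᵥ ζ)) < ρ * (ζ ⬝ᵥ (S *ᵥ ζ)) := by
    set u := C0 *ᵥ ζ with hu
    set v : Fin n → ℝ := -(κ⁻¹ • u) with hv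
    have hw : Sum.elim ζ v ≠ 0 := fun h => hζ (funext fun i => congrFun h (Sum.inl i))
    have h := h2.dotProduct_mulVec_pos hw
    rw [show star (Sum.elim ζ v) = Sum.elim ζ v from star_trivial _] at h
    rw [fromBlocks_mulVec, Sum.elim_comp_inl, Sum.elim_comp_inr,
      sumElim_dotProduct_sumElim] at h
    have key1 : ζ ⬝ᵥ (C0ᵀ *ᵥ v) = u ⬝ᵥ v := by
      rw [dotProduct_mulVec, vecMul_transpose]
    have key2 : ζ ⬝ᵥ ((C0ᵀ * C0) *ᵥ ζ) = u ⬝ᵥ u := by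
      rw [← mulVec_mulVec, dotProduct_mulVec, vecMul_transpose]
    rw [key2]
    simp only [dotProduct_add, add_dotProduct, smul_mulVec, one_mulVec,
      dotProduct_smul, key1, hv, dotProduct_neg, neg_dotProduct, dotProduct_smul,
      smul_dotProduct, smul_eq_mul, smul_neg, neg_neg] at h ⊢
    have hud : v ⬝ᵥ u = u ⬝ᵥ v := dotProduct_comm _ _
    have hκ' : κ ≠ 0 := ne_of_gt hκ
    have hmul : κ * (κ⁻¹ * (κ⁻¹ * (u ⬝ᵥ u))) = κ⁻¹ * (u ⬝ᵥ u) := by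
      field_simp
    have key3 : ζ ⬝ᵥ (C0ᵀ *ᵥ -(κ⁻¹ • u)) = -(κ⁻¹ * (u ⬝ᵥ u)) := by
      rw [← hv, key1, hv, dotProduct_neg, dotProduct_smul, smul_eq_mul]
    rw [key3, ← hu, mul_neg, mul_neg, hmul] at h
    nlinarith [h, hmul]
  -- Part 1 (from h1): the quadratic form inequality in x
  set σ' := G0 n *ᵥ x with hσ
  set R := Rmat α σ' with hR
  have hc : 0 < cfun α σ' := by
    have h0 : 0 ≤ 1 / Real.sqrt (enorm σ') := by positivity
    unfold cfun; linarith
  have hRT : Rᵀ = R := by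
    simp [hR, Rmat, fromBlocks_transpose, Matrix.transpose_smul]
  have hdet : IsUnit R.det := by
    rw [hR, Rmat, det_fromBlocks_zero₂₁, det_smul]
    simp only [det_one, mul_one, smul_eq_mul]
    exact isUnit_iff_ne_zero.2 (pow_ne_zero _ hc.ne')
  have hxne : x ≠ 0 := fun h => hx (by simp [hσ, h])
  have hy : R *ᵥ x ≠ 0 := by
    intro h0
    apply hxne
    have h3 : R⁻¹ *ᵥ (R *ᵥ x) = R⁻¹ *ᵥ 0 := by rw [h0]
    rwa [mulVec_mulVec, nonsing_inv_mul R hdet, one_mulVec, mulVec_zero] at h3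
  have quad : ∀ Q : Matrix (Fin n ⊕ Fin n) (Fin n ⊕ Fin n) ℝ,
      x ⬝ᵥ ((R * Q * R) *ᵥ x) = (R *ᵥ x) ⬝ᵥ (Q *ᵥ (R *ᵥ x)) := by
    intro Q
    calc x ⬝ᵥ ((R * Q * R) *ᵥ x) = x ⬝ᵥ (R *ᵥ ((Q * R) *ᵥ x)) := by
          rw [mulVec_mulVec, Matrix.mul_assoc]
      _ = (Rᵀ *ᵥ x) ⬝ᵥ ((Q * R) *ᵥ x) := by
          rw [dotProduct_mulVec, ← mulVec_transpose]
      _ = (R *ᵥ x) ⬝ᵥ (Q *ᵥ (R *ᵥ x)) := by rw [hRT, mulVec_mulVec]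
  have h := h1.dotProduct_mulVec_pos hy
  rw [show star (R *ᵥ x) = R *ᵥ x from star_trivial _] at h
  rw [neg_mulVec, dotProduct_neg, add_mulVec, smul_mulVec, dotProduct_add,
    dotProduct_smul, smul_eq_mul] at h
  rw [quad M, quad P]
  linarith
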